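/- Let A be a dendriform algebra over a field F of characteristic zero and let X ⊆ A. Then the dendriform subalgebra of A generated by X (the smallest F-subspace of A containing X and closed under ≺ and ≻) is spanned, as an F-vector space, by the evaluations in A of the Chen–Wang normal tree monomials on X: planar binary trees whose leaves are labeled by elements of X, whose internal nodes are labeled by {≺, ≻}, whose only allowed left-growth pattern is (≻, ≻) — whenever the left child w of an internal node v is itself an internal node, both v and w are labeled ≻ — and which contain no internal node v such that v's left child w is internal and w's left child is also internal (no two consecutive left-growth steps). -/
import Mathlib


/-- Operation labels `≺` (prec) and `≻` (succ). -/
inductive DendOp where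
  | prec
  | succ
deriving DecidableEq

/-- Planar (full) binary trees with internal nodes labeled by `DendOp` and leaves
labeled by elements of `A`. -/
inductive DTree (A : Type*) where
  | leaf : A → DTree A
  | node : DendOp → DTree A → DTree A → DTree A

/-- Evaluation of a labeled tree in `A` using operations `p` (for `≺`) and `s` (for `≻`). -/
def DTree.eval {A : Type*} (p s : A → A → A) : DTree A → A
  | .leaf x => x
  | .node DendOp.prec l r => p (l.eval p s) (r.eval p s)
  | .node DendOp.succ l r => s (l.eval p s) (r.eval p s)

/-- All leaf labels of the tree lie in `X`. -/
def DTree.leavesIn {A : Type*} (X : Set A) : DTree A → Prop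
  | .leaf x => x ∈ X
  | .node _ l r => l.leavesIn X ∧ r.leavesIn X

/-- `t` is a leaf. -/
def DTree.isLeaf {A : Type*} : DTree A → Prop
  | .leaf _ => True
  | .node _ _ _ => False

/-- Chen–Wang normality: the only allowed left-growth pattern is `(≻, ≻)`, with no two
consecutive left-growth steps. -/
def DTree.normalCW {A : Type*} : DTree A → Prop
  | .leaf _ => True
  | .node _ (.leaf _) r => r.normalCW
  | .node op (.node q a b) r =>
      op = DendOp.succ ∧ q = DendOp.succ ∧ a.isLeaf ∧
        (DTree.node q a b).normalCW ∧ r.normalCW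

namespace CWAux

def wt {A : Type*} : DTree A → ℕ
  | .leaf _ => 1
  | .node _ l r => 2 * wt l + wt r

lemma wt_pos {A : Type*} (t : DTree A) : 1 ≤ wt t := by
  induction t with
  | leaf x => simp [wt]
  | node op l r ihl ihr => simp only [wt]; omega

variable {F : Type*} [Field F] {A : Type*} [AddCommGroup A] [Module F A]

section

variable (prec succ : A →ₗ[F] A →ₗ[F] A) (X : Set A)

def NS : Set A :=
  {a : A | ∃ t : DTree A, t.leavesIn X ∧ t.normalCW ∧
      t.eval (fun u v => prec u v) (fun u v => succ u v) = a}

abbrev SS : Submodule F A := Submodule.span F (NS prec succ X)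

abbrev ev (t : DTree A) : A := t.eval (fun u v => (prec u v : A)) (fun u v => succ u v)

end

lemma comap_helper {prec succ : A →ₗ[F] A →ₗ[F] A} {X : Set A} (f : A →ₗ[F] A)
    (h : ∀ t : DTree A, t.leavesIn X → t.normalCW → f (ev prec succ t) ∈ SS prec succ X) :
    ∀ b ∈ SS prec succ X, f b ∈ SS prec succ X := by
  intro b hb
  have hle : SS prec succ X ≤ (SS prec succ X).comap f := by
    rw [Submodule.span_le]
    rintro a ⟨t, hl, hn, rfl⟩
    exact h t hl hn
  exact hle hb

lemma opx_mem {prec succ : A →ₗ[F] A →ₗ[F] A} {X : Set A} (op : DendOp) {x : A} (hx : x ∈ X) :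
    ∀ b ∈ SS prec succ X,
      (match op with | DendOp.prec => prec x b | DendOp.succ => succ x b) ∈ SS prec succ X := by
  cases op with
  | prec =>
      refine comap_helper (prec x) ?_
      intro t hl hn
      exact Submodule.subset_span ⟨.node .prec (.leaf x) t, ⟨hx, hl⟩, hn, rfl⟩
  | succ =>
      refine comap_helper (succ x) ?_
      intro t hl hn
      exact Submodule.subset_span ⟨.node .succ (.leaf x) t, ⟨hx, hl⟩, hn, rfl⟩

lemma B1 {prec succ : A →ₗ[F] A →ₗ[F] A} {X : Set A} {x : A} (hx : x ∈ X)
    (tb : DTree A) (hlb : tb.leavesIn X) (hnb : tb.normalCW) :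
    ∀ r ∈ SS prec succ X, succ (succ x (ev prec succ tb)) r ∈ SS prec succ X := by
  refine comap_helper (succ (succ x (ev prec succ tb))) ?_
  intro t hl hn
  refine Submodule.subset_span
    ⟨.node .succ (.node .succ (.leaf x) tb) t, ⟨⟨hx, hlb⟩, hl⟩, ?_, rfl⟩
  exact ⟨rfl, rfl, trivial, hnb, hn⟩

lemma lemB {prec succ : A →ₗ[F] A →ₗ[F] A} {X : Set A} {x : A} (hx : x ∈ X) :
    ∀ b ∈ SS prec succ X, ∀ r ∈ SS prec succ X, succ (succ x b) r ∈ SS prec succ X := by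
  intro b hb r hr
  have := comap_helper ((succ.flip r).comp (succ x))
    (fun t hl hn => by simpa using B1 hx t hl hn r hr) b hb
  simpa using this

lemma tree_mem {prec succ : A →ₗ[F] A →ₗ[F] A}
    (h1 : ∀ x y z : A, prec (succ x y) z = succ x (prec y z))
    (h2 : ∀ x y z : A, prec (prec x y) z = prec x (prec y z) + prec x (succ y z))
    (h3 : ∀ x y z : A, succ x (succ y z) = succ (prec x y) z + succ (succ x y) z)
    {X : Set A} :
    ∀ n (t : DTree A), wt t ≤ n → t.leavesIn X → ev prec succ t ∈ SS prec succ X := by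
  intro n
  induction n with
  | zero => intro t ht _; exact absurd ht (by have := wt_pos t; omega)
  | succ n ih =>
    intro t ht hl
    match t with
    | .leaf x => exact Submodule.subset_span ⟨.leaf x, hl, trivial, rfl⟩
    | .node op (.leaf x) r =>
        have hr : ev prec succ r ∈ SS prec succ X := by
          refine ih r ?_ hl.2
          simp only [wt] at ht; omega
        have := opx_mem (prec := prec) (succ := succ) op hl.1 _ hr
        cases op <;> simpa [ev, DTree.eval] using this
    | .node .prec (.node .succ a b) r =>
        have key := ih (.node .succ a (.node .prec b r))
          (by simp only [wt] at ht ⊢; have := wt_pos a; omega)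
          ⟨hl.1.1, hl.1.2, hl.2⟩
        simp only [ev, DTree.eval] at key ⊢
        rw [h1]; exact key
    | .node .prec (.node .prec a b) r =>
        have k1 := ih (.node .prec a (.node .prec b r))
          (by simp only [wt] at ht ⊢; have := wt_pos a; omega)
          ⟨hl.1.1, hl.1.2, hl.2⟩
        have k2 := ih (.node .prec a (.node .succ b r))
          (by simp only [wt] at ht ⊢; have := wt_pos a; omega)
          ⟨hl.1.1, hl.1.2, hl.2⟩
        simp only [ev, DTree.eval] at k1 k2 ⊢
        rw [h2]; exact Submodule.add_mem _ k1 k2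
    | .node .succ (.node .succ (.leaf x) b) r =>
        have hb : ev prec succ b ∈ SS prec succ X := by
          refine ih b ?_ hl.1.2
          simp only [wt] at ht; omega
        have hr : ev prec succ r ∈ SS prec succ X := by
          refine ih r ?_ hl.2
          simp only [wt] at ht; omega
        simpa [ev, DTree.eval] using lemB hl.1.1 _ hb _ hr
    | .node .succ (.node .prec (.leaf x) b) r =>
        have hb : ev prec succ b ∈ SS prec succ X := by
          refine ih b ?_ hl.1.2
          simp only [wt] at ht; omega
        have hr : ev prec succ r ∈ SS prec succ X := by
          refine ih r ?_ hl.2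
          simp only [wt] at ht; omega
        have k1 := ih (.node .succ (.leaf x) (.node .succ b r))
          (by simp only [wt] at ht ⊢; omega)
          ⟨hl.1.1, hl.1.2, hl.2⟩
        have k2 := lemB hl.1.1 _ hb _ hr
        simp only [ev, DTree.eval] at k1 k2 ⊢
        set vb := DTree.eval (fun u v => ((prec u) v : A)) (fun u v => (succ u) v) b with hvb
        set vr := DTree.eval (fun u v => ((prec u) v : A)) (fun u v => (succ u) v) r with hvr
        have key : succ (prec x vb) vr = succ x (succ vb vr) - succ (succ x vb) vr :=
          eq_sub_of_add_eq (h3 x vb vr).symm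
        rw [key]
        exact Submodule.sub_mem _ k1 k2
    | .node .succ (.node q (.node qa a1 a2) b) r =>
        -- abbreviations
        have hla1 := hl.1.1.1
        have hla2 := hl.1.1.2
        have hlb := hl.1.2
        have hlr := hl.2
        have w1 := wt_pos a1
        have w2 := wt_pos a2
        -- the term succ (prec va vb) vr is in SS, where va = ev (node qa a1 a2)
        have hmix : succ (prec (ev prec succ (.node qa a1 a2)) (ev prec succ b))
            (ev prec succ r) ∈ SS prec succ X := by
          cases qa with
          | succ =>
              have k := ih (.node .succ (.node .succ a1 (.node .prec a2 b)) r)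
                (by simp only [wt] at ht ⊢; omega)
                ⟨⟨hla1, hla2, hlb⟩, hlr⟩
              simp only [ev, DTree.eval] at k ⊢
              rw [h1]; exact k
          | prec =>
              have k1 := ih (.node .succ (.node .prec a1 (.node .prec a2 b)) r)
                (by simp only [wt] at ht ⊢; omega)
                ⟨⟨hla1, hla2, hlb⟩, hlr⟩
              have k2 := ih (.node .succ (.node .prec a1 (.node .succ a2 b)) r)
                (by simp only [wt] at ht ⊢; omega)
                ⟨⟨hla1, hla2, hlb⟩, hlr⟩
              simp only [ev, DTree.eval] at k1 k2 ⊢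
              rw [h2, map_add, LinearMap.add_apply]
              exact Submodule.add_mem _ k1 k2
        cases q with
        | prec => simpa [ev, DTree.eval] using hmix
        | succ =>
            have k1 := ih (.node .succ (.node qa a1 a2) (.node .succ b r))
              (by cases qa <;> simp only [wt] at ht ⊢ <;> omega)
              ⟨⟨hla1, hla2⟩, hlb, hlr⟩
            have key : succ (succ (ev prec succ (.node qa a1 a2)) (ev prec succ b))
                (ev prec succ r)
                = succ (ev prec succ (.node qa a1 a2))
                    (succ (ev prec succ b) (ev prec succ r))
                  - succ (prec (ev prec succ (.node qa a1 a2)) (ev prec succ b))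
                    (ev prec succ r) := by
              rw [h3]; abel
            have goal : succ (succ (ev prec succ (.node qa a1 a2)) (ev prec succ b))
                (ev prec succ r) ∈ SS prec succ X := by
              rw [key]
              refine Submodule.sub_mem _ ?_ hmix
              simpa [ev, DTree.eval] using k1
            simpa [ev, DTree.eval] using goal

end CWAux

/-- in a dendriform algebra `A` over a field of characteristic zero, the
dendriform subalgebra generated by `X ⊆ A` is spanned by the evaluations of the
Chen–Wang normal tree monomials on `X`. -/
theorem dendriform_subalgebra_spanned_by_chen_wang_monomials
    (F : Type*) [Field F] [CharZero F]
    (A : Type*) [AddCommGroup A] [Module F A]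
    (prec succ : A →ₗ[F] A →ₗ[F] A)
    (h1 : ∀ x y z : A, prec (succ x y) z = succ x (prec y z))
    (h2 : ∀ x y z : A, prec (prec x y) z = prec x (prec y z) + prec x (succ y z))
    (h3 : ∀ x y z : A, succ x (succ y z) = succ (prec x y) z + succ (succ x y) z)
    (X : Set A) :
    sInf {p : Submodule F A |
        X ⊆ p ∧ ∀ a ∈ p, ∀ b ∈ p, prec a b ∈ p ∧ succ a b ∈ p} =
      Submodule.span F
        {a : A | ∃ t : DTree A, t.leavesIn X ∧ t.normalCW ∧
          t.eval (fun u v => prec u v) (fun u v => succ u v) = a} := by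
  classical
  have hSS : Submodule.span F
      {a : A | ∃ t : DTree A, t.leavesIn X ∧ t.normalCW ∧
        t.eval (fun u v => prec u v) (fun u v => succ u v) = a}
      = CWAux.SS prec succ X := rfl
  rw [hSS]
  have tm := CWAux.tree_mem h1 h2 h3 (X := X)
  apply le_antisymm
  · -- sInf ≤ SS : SS is a member of the set
    apply sInf_le
    constructor
    · intro x hx
      exact Submodule.subset_span ⟨.leaf x, hx, trivial, rfl⟩
    · -- closure
      have step1 : ∀ (op : DendOp) (t1 : DTree A), t1.leavesIn X →
          ∀ b ∈ CWAux.SS prec succ X,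
            (match op with
              | DendOp.prec => prec (CWAux.ev prec succ t1) b
              | DendOp.succ => succ (CWAux.ev prec succ t1) b) ∈ CWAux.SS prec succ X := by
        intro op t1 hl1
        cases op with
        | prec =>
            refine CWAux.comap_helper (prec (CWAux.ev prec succ t1)) ?_
            intro t2 hl2 _
            exact tm _ (.node .prec t1 t2) le_rfl ⟨hl1, hl2⟩
        | succ =>
            refine CWAux.comap_helper (succ (CWAux.ev prec succ t1)) ?_
            intro t2 hl2 _
            exact tm _ (.node .succ t1 t2) le_rfl ⟨hl1, hl2⟩
      intro a ha b hb
      constructor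
      · have := CWAux.comap_helper (prec.flip b)
          (fun t hl hn => by simpa using step1 .prec t hl b hb) a ha
        simpa using this
      · have := CWAux.comap_helper (succ.flip b)
          (fun t hl hn => by simpa using step1 .succ t hl b hb) a ha
        simpa using this
  · rw [Submodule.span_le]
    rintro a ⟨t, hl, -, rfl⟩
    have : ∀ (u : DTree A), u.leavesIn X →
        ∀ p ∈ {p : Submodule F A |
          X ⊆ p ∧ ∀ a ∈ p, ∀ b ∈ p, prec a b ∈ p ∧ succ a b ∈ p},
          u.eval (fun u v => prec u v) (fun u v => succ u v) ∈ p := by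
      intro u hu p hp
      induction u with
      | leaf x => exact hp.1 hu
      | node op l r ihl ihr =>
          have hlm := ihl hu.1
          have hrm := ihr hu.2
          cases op with
          | prec => exact (hp.2 _ hlm _ hrm).1
          | succ => exact (hp.2 _ hlm _ hrm).2
    exact Submodule.mem_sInf.mpr (fun p hp => this t hl p hp)
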